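/- arXiv:2309.11651 — 2 statements merged into one kernel-verified Lean document; each statement's English description precedes it below -/
import Mathlib

section
/- Let a, b, c, h > 0 and define z* = (1/h)√(a(ch + a h²/(4b²))) − a/(2b) and ξ* = √(a(ch + a h²/(4b²))). Define f : [0,∞) → ℝ piecewise by f(z) = (2/√a)√(ch + a h²/(4b²)) z − (h/a) z² for z < z*, and f(z) = (h/b) z + ha/(2b²) − (√a/b)√(ch + a h²/(4b²)) + c for z ≥ z*. Then f(0) = 0, f is continuously differentiable at z*, and f satisfies the first-order ODE (a/2) f′(z) + h z − b (f(z) − c)⁺ = ξ* for all z ≥ 0. -/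
set_option maxHeartbeats 4000000

/-- Closed-form solution of the one-dimensional ergodic HJB equation with linear cost:
with `z* = (1/h)√(a(ch + ah²/(4b²))) − a/(2b)` and `ξ* = √(a(ch + ah²/(4b²)))`, the
piecewise function `f` defined below satisfies `f 0 = 0`, is continuously
differentiable at `z*`, and solves `(a/2) f′(z) + h z − b (f(z) − c)⁺ = ξ*` on
`[0,∞)`. -/
theorem stmt_10 (a b c h : ℝ) (ha : 0 < a) (hb : 0 < b) (hc : 0 < c) (hh : 0 < h) :
    let zstar : ℝ := (1 / h) * Real.sqrt (a * (c * h + a * h ^ 2 / (4 * b ^ 2))) - a / (2 * b)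
    let ξstar : ℝ := Real.sqrt (a * (c * h + a * h ^ 2 / (4 * b ^ 2)))
    let f : ℝ → ℝ := fun z =>
      if z < zstar then
        (2 / Real.sqrt a) * Real.sqrt (c * h + a * h ^ 2 / (4 * b ^ 2)) * z - (h / a) * z ^ 2
      else
        (h / b) * z + h * a / (2 * b ^ 2) -
          (Real.sqrt a / b) * Real.sqrt (c * h + a * h ^ 2 / (4 * b ^ 2)) + c
    f 0 = 0 ∧ DifferentiableAt ℝ f zstar ∧ ContinuousAt (deriv f) zstar ∧
      ∀ z, 0 ≤ z → a / 2 * deriv f z + h * z - b * max (f z - c) 0 = ξstar := by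
  intro zstar ξstar f
  have hKpos : (0:ℝ) < c * h + a * h ^ 2 / (4 * b ^ 2) := by positivity
  have hK2 : Real.sqrt (c * h + a * h ^ 2 / (4 * b ^ 2)) ^ 2 = c * h + a * h ^ 2 / (4 * b ^ 2) :=
    Real.sq_sqrt hKpos.le
  have hsa2 : Real.sqrt a ^ 2 = a := Real.sq_sqrt ha.le
  have hsa0 : (0:ℝ) < Real.sqrt a := Real.sqrt_pos.2 ha
  have hK0 : (0:ℝ) < Real.sqrt (c * h + a * h ^ 2 / (4 * b ^ 2)) := Real.sqrt_pos.2 hKpos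
  have hξ : ξstar = Real.sqrt a * Real.sqrt (c * h + a * h ^ 2 / (4 * b ^ 2)) := by
    simp only [ξstar]
    rw [Real.sqrt_mul ha.le]
  have hξpos : (0:ℝ) < ξstar := by rw [hξ]; positivity
  have hξ2 : ξstar ^ 2 = a * c * h + a ^ 2 * h ^ 2 / (4 * b ^ 2) := by
    rw [hξ, mul_pow, hsa2, hK2]; ring
  have hzb : h * zstar = ξstar - a * h / (2 * b) := by
    simp only [zstar, ξstar]
    field_simp
  have hξ2' : ξstar ^ 2 * (4 * b ^ 2) = a * c * h * (4 * b ^ 2) + a ^ 2 * h ^ 2 := by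
    rw [hξ2]; field_simp
  have hd : a * h / (2 * b) < ξstar := by
    rw [div_lt_iff₀ (by positivity : (0:ℝ) < 2 * b)]
    have key : (a*h - 2*b*ξstar)*(a*h + 2*b*ξstar) = -(4*a*b^2*c*h) := by
      linear_combination (-1 : ℝ) * hξ2'
    have hpos : 0 < a*h + 2*b*ξstar := by positivity
    nlinarith [key, hpos, mul_pos (mul_pos (mul_pos ha hb) hb) (mul_pos hc hh)]
  have hz0 : (0:ℝ) < zstar := by
    have h1 : 0 < h * zstar := by rw [hzb]; linarith [hd]
    have h2 := div_pos h1 hh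
    rwa [mul_div_cancel_left₀ _ hh.ne'] at h2
  have hzb2 : h * zstar * (2 * b) = ξstar * (2 * b) - a * h := by
    rw [hzb]; field_simp
  have hA : (2 / Real.sqrt a) * Real.sqrt (c * h + a * h ^ 2 / (4 * b ^ 2)) = 2 * ξstar / a := by
    rw [hξ]; rw [div_mul_eq_mul_div, div_eq_div_iff hsa0.ne' ha.ne']
    linear_combination (-2 * Real.sqrt (c * h + a * h ^ 2 / (4 * b ^ 2))) * hsa2
  have hB : Real.sqrt a / b * Real.sqrt (c * h + a * h ^ 2 / (4 * b ^ 2)) = ξstar / b := by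
    rw [hξ]; ring
  set F1 : ℝ → ℝ := fun z => 2 * ξstar / a * z - h / a * z ^ 2 with hF1
  set F2 : ℝ → ℝ := fun z => h / b * z + h * a / (2 * b ^ 2) - ξstar / b + c with hF2
  have hfF1 : ∀ x, x < zstar → f x = F1 x := by
    intro x hx
    simp only [f, if_pos hx, hF1]
    rw [hA]
  have hfF2 : ∀ x, zstar ≤ x → f x = F2 x := by
    intro x hx
    simp only [f, if_neg (not_lt.2 hx), hF2]
    rw [hB]
  have hF1deriv : ∀ x : ℝ, HasDerivAt F1 (2 * ξstar / a - h / a * (2 * x)) x := by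
    intro x
    have h1 := ((hasDerivAt_id x).const_mul (2 * ξstar / a)).sub
      ((hasDerivAt_pow 2 x).const_mul (h / a))
    simpa [hF1, mul_comm, Pi.sub_def] using h1
  have hF2deriv : ∀ x : ℝ, HasDerivAt F2 (h / b) x := by
    intro x
    have h1 := ((((hasDerivAt_id x).const_mul (h / b)).add_const
      (h * a / (2 * b ^ 2))).sub_const (ξstar / b)).add_const c
    simpa [hF2] using h1
  have hdbeq : 2 * ξstar / a - h / a * (2 * zstar) = h / b := by
    have h3 : 2 * ξstar / a - h / a * (2 * zstar) = (2 * ξstar - 2 * h * zstar) / a := by ring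
    rw [h3, div_eq_div_iff ha.ne' hb.ne']
    linear_combination (-1 : ℝ) * hzb2
  have hF1c : F1 zstar = c := by
    have h3 : F1 zstar = (2 * ξstar * zstar - h * zstar ^ 2) / a := by simp only [hF1]; ring
    rw [h3, div_eq_iff ha.ne']
    have G4 : 4 * b ^ 2 * h * (2 * ξstar * zstar - h * zstar ^ 2) = 4 * b ^ 2 * h * (c * a) := by
      linear_combination hξ2' + (a * h + 2 * b * ξstar - 2 * b * h * zstar) * hzb2
    exact mul_left_cancel₀ (by positivity) G4
  have hF2c : F2 zstar = c := by
    simp only [hF2]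
    linear_combination (1 / b) * hzb
  have hfzc : f zstar = c := (hfF2 zstar le_rfl).trans hF2c
  have hIic : HasDerivWithinAt f (h / b) (Set.Iic zstar) zstar := by
    have h1 : HasDerivWithinAt F1 (h / b) (Set.Iic zstar) zstar := by
      have h2 := hF1deriv zstar
      rw [hdbeq] at h2
      exact h2.hasDerivWithinAt
    refine h1.congr (fun x hx => ?_) (by rw [hfzc, hF1c])
    rcases lt_or_eq_of_le (Set.mem_Iic.mp hx) with hlt | he
    · exact hfF1 x hlt
    · rw [he, hfzc, hF1c]
  have hIci : HasDerivWithinAt f (h / b) (Set.Ici zstar) zstar := by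
    exact ((hF2deriv zstar).hasDerivWithinAt).congr (fun x hx => hfF2 x hx)
      (hfF2 zstar le_rfl)
  have hfd : HasDerivAt f (h / b) zstar := by
    have h1 := hIic.union hIci
    rwa [Set.Iic_union_Ici, hasDerivWithinAt_univ] at h1
  have hderiv : ∀ z, deriv f z = max (2 * ξstar / a - h / a * (2 * z)) (h / b) := by
    intro z
    rcases lt_trichotomy z zstar with hz | hz | hz
    · have hev : f =ᶠ[nhds z] F1 := by
        filter_upwards [Iio_mem_nhds hz] with x hx
        exact hfF1 x hx
      rw [hev.deriv_eq, (hF1deriv z).deriv, max_eq_left]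
      rw [← hdbeq]
      nlinarith [mul_pos (div_pos hh ha) (sub_pos.2 hz)]
    · rw [hz, hfd.deriv, hdbeq, max_self]
    · have hev : f =ᶠ[nhds z] F2 := by
        filter_upwards [Ioi_mem_nhds hz] with x hx
        exact hfF2 x hx.le
      rw [hev.deriv_eq, (hF2deriv z).deriv, max_eq_right]
      rw [← hdbeq]
      nlinarith [mul_pos (div_pos hh ha) (sub_pos.2 hz)]
  refine ⟨?_, hfd.differentiableAt, ?_, ?_⟩
  · rw [hfF1 0 hz0]
    simp [hF1]
  · have heq : deriv f = fun z => max (2 * ξstar / a - h / a * (2 * z)) (h / b) :=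
      funext hderiv
    rw [heq]
    exact (Continuous.max (continuous_const.sub (continuous_const.mul
      (continuous_const.mul continuous_id))) continuous_const).continuousAt
  · intro z hznn
    rcases lt_or_ge z zstar with hz | hz
    · have hml : h / b ≤ 2 * ξstar / a - h / a * (2 * z) := by
        rw [← hdbeq]; nlinarith [mul_pos (div_pos hh ha) (sub_pos.2 hz)]
      rw [hderiv z, max_eq_left hml]
      have hle : f z - c ≤ 0 := by
        rw [hfF1 z hz]
        have hle2 : 2 * ξstar * z - h * z ^ 2 ≤ a * c := by
          have hX : 0 < 2 * b * h * (zstar - z) :=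
            mul_pos (by positivity) (sub_pos.2 hz)
          have E : 4 * b ^ 2 * h * (a * c - 2 * ξstar * z + h * z ^ 2) =
              (2 * b * h * (zstar - z)) ^ 2 + 2 * (a * h) * (2 * b * h * (zstar - z)) := by
            linear_combination (-1 : ℝ) * hξ2' - (a * h + (2 * b * ξstar - 2 * b * h * z) +
              (2 * b * h * zstar - 2 * b * h * z)) * hzb2
          have hS : 0 ≤ (2 * b * h * (zstar - z)) ^ 2 +
              2 * (a * h) * (2 * b * h * (zstar - z)) :=
            add_nonneg (sq_nonneg _) (le_of_lt (mul_pos (by positivity) hX))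
          have h4 : 0 ≤ 4 * b ^ 2 * h * (a * c - 2 * ξstar * z + h * z ^ 2) := E ▸ hS
          have hpos4 : (0:ℝ) < 4 * b ^ 2 * h := by positivity
          nlinarith [h4, hpos4]
        have h3 : F1 z = (2 * ξstar * z - h * z ^ 2) / a := by simp only [hF1]; ring
        rw [h3]
        rw [sub_nonpos, div_le_iff₀ ha]
        nlinarith [hle2]
      rw [max_eq_right hle]
      have e : a / 2 * (2 * ξstar / a - h / a * (2 * z)) = ξstar - h * z := by
        field_simp
      rw [e]
      ring
    · have hml : 2 * ξstar / a - h / a * (2 * z) ≤ h / b := by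
        rw [← hdbeq]; nlinarith [mul_nonneg (div_pos hh ha).le (sub_nonneg.2 hz)]
      rw [hderiv z, max_eq_right hml]
      rw [hfF2 z hz]
      have hmx : F2 z - c = h / b * (z - zstar) := by
        simp only [hF2]
        linear_combination (1 / b) * hzb
      have hmx2 : 0 ≤ h / b * (z - zstar) :=
        mul_nonneg (div_pos hh hb).le (sub_nonneg.2 hz)
      rw [hmx, max_eq_left hmx2]
      field_simp
      linear_combination hzb2
end

section
/- Let r, h, a > 0 with h ≤ r c for some c > 0, and define V(z) = (h√a / (√2 r^{3/2})) e^{−√(2r/a) z} + h z / r for z ≥ 0. Then V′(0) = 0, V′(z) = (h/r)(1 − e^{−√(2r/a) z}) < c for all z ≥ 0, and V satisfies the ODE (a/2)V″(z) + h z − b (V′(z) − c)⁺ = r V(z) for every b ≥ 0 and z ≥ 0. -/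
/-- One-dimensional discounted HJB with linear cost, case `h ≤ rc`: the function
`V(z) = (h√a/(√2 r^{3/2})) e^{−√(2r/a) z} + hz/r` satisfies `V′(0) = 0`,
`V′(z) = (h/r)(1 − e^{−√(2r/a) z}) < c` for all `z ≥ 0`, and solves
`(a/2)V″(z) + hz − b(V′(z) − c)⁺ = rV(z)` for every `b ≥ 0` and `z ≥ 0`. -/
theorem stmt_12 (r h a c : ℝ) (hr : 0 < r) (hh : 0 < h) (ha : 0 < a) (hc : 0 < c)
    (hhc : h ≤ r * c) :
    let V : ℝ → ℝ := fun z =>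
      (h * Real.sqrt a / (Real.sqrt 2 * (r * Real.sqrt r))) *
          Real.exp (-(Real.sqrt (2 * r / a)) * z) + h * z / r
    deriv V 0 = 0 ∧
      (∀ z, 0 ≤ z →
        deriv V z = (h / r) * (1 - Real.exp (-(Real.sqrt (2 * r / a)) * z)) ∧
          deriv V z < c) ∧
      (∀ b z, 0 ≤ b → 0 ≤ z →
        a / 2 * deriv (deriv V) z + h * z - b * max (deriv V z - c) 0 = r * V z) := by
  intro V
  set α := Real.sqrt (2 * r / a) with hαdef
  set K := h * Real.sqrt a / (Real.sqrt 2 * (r * Real.sqrt r)) with hKdef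
  have sr : Real.sqrt r > 0 := Real.sqrt_pos.mpr hr
  have sa : Real.sqrt a > 0 := Real.sqrt_pos.mpr ha
  have s2 : Real.sqrt 2 > 0 := Real.sqrt_pos.mpr (by norm_num)
  have hsr : Real.sqrt r * Real.sqrt r = r := Real.mul_self_sqrt hr.le
  have hsa : Real.sqrt a * Real.sqrt a = a := Real.mul_self_sqrt ha.le
  have hs2 : Real.sqrt 2 * Real.sqrt 2 = 2 := Real.mul_self_sqrt (by norm_num)
  have hα : α = Real.sqrt 2 * Real.sqrt r / Real.sqrt a := by
    rw [hαdef, Real.sqrt_div (by positivity) a, Real.sqrt_mul (by norm_num) r]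
  have hαpos : 0 < α := by rw [hα]; positivity
  have hexp : ∀ z : ℝ, HasDerivAt (fun z : ℝ => Real.exp (-α * z))
      (Real.exp (-α * z) * (-α)) z := by
    intro z
    have h1 : HasDerivAt (fun z : ℝ => -α * z) (-α) z := by
      simpa using (hasDerivAt_id z).const_mul (-α)
    exact (Real.hasDerivAt_exp (-α * z)).comp z h1
  have hKα : K * α = h / r := by
    rw [hKdef, hα]
    field_simp
  have hV : ∀ z, HasDerivAt V (h / r * (1 - Real.exp (-α * z))) z := by
    intro z
    have h3 : HasDerivAt (fun z : ℝ => h * z / r) (h / r) z := by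
      simpa using ((hasDerivAt_id z).const_mul h).div_const r
    have h4 := ((hexp z).const_mul K).add h3
    refine h4.congr_deriv ?_
    have : K * (Real.exp (-α * z) * (-α)) = -(h / r) * Real.exp (-α * z) := by
      rw [show K * (Real.exp (-α * z) * (-α)) = -(K * α) * Real.exp (-α * z) by ring, hKα]
    rw [this]; ring
  have hDV : deriv V = fun z => h / r * (1 - Real.exp (-α * z)) := funext fun z => (hV z).deriv
  have hDDV : ∀ z : ℝ, deriv (deriv V) z = h / r * (α * Real.exp (-α * z)) := by
    intro z
    rw [hDV]
    have h5 : HasDerivAt (fun z : ℝ => h / r * (1 - Real.exp (-α * z)))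
        (h / r * (α * Real.exp (-α * z))) z := by
      have := ((hasDerivAt_const z (1:ℝ)).sub (hexp z)).const_mul (h / r)
      refine this.congr_deriv ?_
      ring
    exact h5.deriv
  refine ⟨?_, ?_, ?_⟩
  · rw [(hV 0).deriv]
    simp
  · intro z hz
    refine ⟨(hV z).deriv, ?_⟩
    rw [(hV z).deriv]
    have hE : 0 < Real.exp (-α * z) := Real.exp_pos _
    have hhr : h / r ≤ c := (div_le_iff₀ hr).mpr (by linarith [hhc])
    nlinarith [div_pos hh hr]
  · intro b z hb hz
    have hlt : deriv V z < c := by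
      rw [(hV z).deriv]
      have hE : 0 < Real.exp (-α * z) := Real.exp_pos _
      have hhr : h / r ≤ c := (div_le_iff₀ hr).mpr (by linarith [hhc])
      nlinarith [div_pos hh hr]
    have hmax : max (deriv V z - c) 0 = 0 := max_eq_right (by linarith)
    rw [hmax, hDDV z, mul_zero, sub_zero]
    show a / 2 * (h / r * (α * Real.exp (-α * z))) + h * z =
      r * (K * Real.exp (-α * z) + h * z / r)
    have key : a / 2 * (h / r * α) = r * K := by
      rw [hα, hKdef]
      field_simp
      linear_combination (a*(Real.sqrt r*Real.sqrt r))*hs2 + (2*a)*hsr - (2*r)*hsa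
    have : a / 2 * (h / r * (α * Real.exp (-α * z))) = r * K * Real.exp (-α * z) := by
      rw [show a / 2 * (h / r * (α * Real.exp (-α * z))) =
        (a / 2 * (h / r * α)) * Real.exp (-α * z) by ring, key]
    rw [this]
    field_simp
end
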